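/- Let A be a commutative k-algebra. The augmented simplicial k-module ℬ^d(A) with B_n = A^{⊗C(n+d+1,d)} (indexed by weakly increasing d-tuples in {0,...,n+1}), augmentation μ : B_0 → A given by multiplication, and face maps δ_i that multiply entries whose s-th indices are i and i+1 (agreeing elsewhere), is acyclic as a chain complex of k-vector spaces: the extra degeneracy σ_{−1} : B_n → B_{n+1}, sending the entry at position (j_1,...,j_d) to position (j_1+1,...,j_d+1) and placing 1 in every position (0, k_2, ..., k_d), provides a contracting homotopy. -/

import Mathlib

open TensorProduct PiTensorProduct

/-- The index set of the bar-like resolution `ℬ^d(A)` in simplicial degree `n`: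
weakly increasing `d`-tuples with entries in `{0, 1, …, n + 1}`. -/
def BarIdx (d n : ℕ) := {j : Fin d → Fin (n + 2) // Monotone j}

instance (d n : ℕ) : DecidablePred fun j : Fin d → Fin (n + 2) => Monotone j :=
  fun j => decidable_of_iff (∀ a b, a ≤ b → j a ≤ j b)
    ⟨fun H a b hab => H a b hab, fun H a b hab => H hab⟩

instance (d n : ℕ) : Fintype (BarIdx d n) := Subtype.fintype _

instance (d n : ℕ) : DecidableEq (BarIdx d n) := Subtype.instDecidableEq

/-- The collapse of indices underlying the face map `δ_i^ℬ` (for `i ∈ {0, …, n + 1}`):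
it identifies the values `i` and `i + 1` in each coordinate. -/
def BarIdx.collapse {d n : ℕ} (i : Fin (n + 2)) (J : BarIdx d (n + 1)) : BarIdx d n :=
  ⟨fun s => i.predAbove (J.1 s), fun a b hab => Fin.predAbove_right_monotone i (J.2 hab)⟩

/-- The shift of indices underlying the extra degeneracy `σ_{-1}`: it sends the position
`(j₁, …, j_d)` to the position `(j₁ + 1, …, j_d + 1)`. -/
def BarIdx.shift {d n : ℕ} (J : BarIdx d n) : BarIdx d (n + 1) :=
  ⟨fun s => (J.1 s).succ, fun a b hab => Fin.succ_le_succ_iff.mpr (J.2 hab)⟩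

section Aux

lemma double_prod {α β M : Type*} [Fintype α] [Fintype β] [DecidableEq β] [CommMonoid M]
    (f : α → β) (P : β → Prop) [DecidablePred P] (a : α → M) :
    ∏ K ∈ Finset.univ.filter P, ∏ J ∈ Finset.univ.filter (fun J => f J = K), a J
      = ∏ J ∈ Finset.univ.filter (fun J => P (f J)), a J := by
  classical
  rw [← Finset.prod_fiberwise_of_maps_to (s := Finset.univ.filter (fun J => P (f J)))
    (t := Finset.univ.filter P) (g := f)
    (fun x hx => by simp_all) a]
  refine Finset.prod_congr rfl fun K hK => Finset.prod_congr ?_ fun _ _ => rfl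
  ext J
  simp only [Finset.mem_filter, Finset.mem_univ, true_and] at hK ⊢
  exact ⟨fun h => ⟨by rw [h]; exact hK, h⟩, fun h => h.2⟩

lemma BarIdx.collapse_zero_shift {d n : ℕ} (J : BarIdx d n) :
    BarIdx.collapse 0 (BarIdx.shift J) = J := by
  apply Subtype.ext; funext s
  simp [BarIdx.collapse, BarIdx.shift]

lemma BarIdx.collapse_succ_shift {d n : ℕ} (i : Fin (n + 2)) (J : BarIdx d (n + 1)) :
    BarIdx.collapse i.succ (BarIdx.shift J) = BarIdx.shift (BarIdx.collapse i J) := by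
  apply Subtype.ext; funext s
  simp [BarIdx.collapse, BarIdx.shift, Fin.succ_predAbove_succ]

lemma BarIdx.collapse_one_shift {d : ℕ} (J : BarIdx d 0) :
    BarIdx.collapse 1 (BarIdx.shift J) = ⟨fun _ => 1, monotone_const⟩ := by
  apply Subtype.ext; funext s
  show (1 : Fin 2).predAbove ((J.1 s).succ) = 1
  have : ∀ x : Fin 2, (1 : Fin 2).predAbove x.succ = 1 := by decide
  exact this _

end Aux

/-- The augmented simplicial `k`-module `ℬ^d(A)`, with `B_n = A^{⊗ C(n+d+1, d)}` indexed by
weakly increasing `d`-tuples in `{0, …, n + 1}`, augmentation `μ : B_0 → A` given by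
multiplication, face maps `δ_i` multiplying the entries whose `s`-th indices are `i` and
`i + 1` (and agreeing elsewhere), is acyclic as a chain complex of `k`-vector spaces:
the extra degeneracy `σ_{-1} : B_n → B_{n+1}` — sending the entry at position
`(j₁, …, j_d)` to position `(j₁ + 1, …, j_d + 1)` and placing `1` in every position
`(0, k₂, …, k_d)` — provides a contracting homotopy. -/
theorem bar_resolution_acyclic (k A : Type) [Field k] [CommRing A] [Algebra k A]
    (d : ℕ) (hd : 1 ≤ d)
    (δ : ∀ n, ∀ _ : Fin (n + 2), (⨂[k] (_ : BarIdx d (n + 1)), A) →ₗ[k]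
      (⨂[k] (_ : BarIdx d n), A))
    (hδ : ∀ n (i : Fin (n + 2)) (a : BarIdx d (n + 1) → A),
      δ n i (tprod k a) = tprod k fun K : BarIdx d n =>
        ∏ J ∈ Finset.univ.filter fun J : BarIdx d (n + 1) => BarIdx.collapse i J = K, a J)
    (σm : ∀ n, (⨂[k] (_ : BarIdx d n), A) →ₗ[k] (⨂[k] (_ : BarIdx d (n + 1)), A))
    (hσm : ∀ n (a : BarIdx d n → A),
      σm n (tprod k a) = tprod k fun K : BarIdx d (n + 1) =>
        ∏ J ∈ Finset.univ.filter fun J : BarIdx d n => BarIdx.shift J = K, a J)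
    (μ : (⨂[k] (_ : BarIdx d 0), A) →ₗ[k] A)
    (hμ : ∀ a : BarIdx d 0 → A, μ (tprod k a) = ∏ J, a J) :
    -- `σ_{-1}` is a contracting homotopy for the augmented complex:
    (∀ (n : ℕ) (x : ⨂[k] (_ : BarIdx d n), A), δ n 0 (σm n x) = x) ∧
    (∀ (n : ℕ) (i : Fin (n + 2)) (x : ⨂[k] (_ : BarIdx d (n + 1)), A),
      δ (n + 1) i.succ (σm (n + 1) x) = σm n (δ n i x)) ∧
    -- hence the augmented chain complex (with differential `∑ (-1)^i δ_i`) is acyclic: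
    Function.Surjective μ ∧
    (∀ x : ⨂[k] (_ : BarIdx d 0), A, μ x = 0 →
      ∃ y : ⨂[k] (_ : BarIdx d 1), A,
        (∑ i : Fin 2, ((-1 : ℤ) ^ (i : ℕ)) • δ 0 i) y = x) ∧
    (∀ (n : ℕ) (x : ⨂[k] (_ : BarIdx d (n + 1)), A),
      (∑ i : Fin (n + 2), ((-1 : ℤ) ^ (i : ℕ)) • δ n i) x = 0 →
      ∃ y : ⨂[k] (_ : BarIdx d (n + 2)), A,
        (∑ i : Fin (n + 3), ((-1 : ℤ) ^ (i : ℕ)) • δ (n + 1) i) y = x) := by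
  classical
  -- Part 1: δ₀ ∘ σ₋₁ = id
  have h1 : ∀ n, (δ n 0).comp (σm n) = LinearMap.id := by
    intro n
    apply PiTensorProduct.ext
    apply MultilinearMap.ext
    intro a
    simp only [LinearMap.compMultilinearMap_apply, LinearMap.comp_apply, hσm, hδ,
      LinearMap.id_coe, id_eq]
    congr 1
    funext L
    rw [double_prod (BarIdx.shift) (fun K => BarIdx.collapse 0 K = L) a]
    simp only [BarIdx.collapse_zero_shift]
    rw [show Finset.univ.filter (fun J : BarIdx d n => J = L) = {L} by ext; simp,
      Finset.prod_singleton]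
  have hone : ∀ n x, δ n 0 (σm n x) = x := fun n x => LinearMap.congr_fun (h1 n) x
  -- Part 2: δ_{i+1} ∘ σ₋₁ = σ₋₁ ∘ δ_i
  have h2 : ∀ n (i : Fin (n + 2)),
      (δ (n + 1) i.succ).comp (σm (n + 1)) = (σm n).comp (δ n i) := by
    intro n i
    apply PiTensorProduct.ext
    apply MultilinearMap.ext
    intro a
    simp only [LinearMap.compMultilinearMap_apply, LinearMap.comp_apply, hσm, hδ]
    congr 1
    funext L
    rw [double_prod (BarIdx.shift) (fun K => BarIdx.collapse i.succ K = L) a,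
      double_prod (BarIdx.collapse i) (fun J' => BarIdx.shift J' = L) a]
    refine Finset.prod_congr ?_ fun _ _ => rfl
    apply Finset.filter_congr
    intro J _
    simp [BarIdx.collapse_succ_shift]
  have hcomm : ∀ n (i : Fin (n + 2)) x,
      δ (n + 1) i.succ (σm (n + 1) x) = σm n (δ n i x) :=
    fun n i x => LinearMap.congr_fun (h2 n i) x
  -- the "extra degeneracy at level -1"
  set L₁ : BarIdx d 0 := ⟨fun _ => 1, monotone_const⟩ with hL₁
  set η : A →ₗ[k] (⨂[k] (_ : BarIdx d 0), A) :=
    (tprod k (s := fun _ : BarIdx d 0 => A)).toLinearMap (fun _ => (1 : A)) L₁ with hη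
  have h3 : (δ 0 1).comp (σm 0) = η.comp μ := by
    apply PiTensorProduct.ext
    apply MultilinearMap.ext
    intro a
    simp only [LinearMap.compMultilinearMap_apply, LinearMap.comp_apply, hσm, hδ, hμ, hη,
      MultilinearMap.toLinearMap]
    show _ = tprod k (Function.update (fun _ => (1 : A)) L₁ (∏ J, a J))
    congr 1
    funext L
    rw [double_prod (BarIdx.shift) (fun K => BarIdx.collapse 1 K = L) a,
      Function.update_apply]
    by_cases hL : L = L₁
    · rw [if_pos hL, show Finset.univ.filter
          (fun J : BarIdx d 0 => BarIdx.collapse 1 (BarIdx.shift J) = L) = Finset.univ by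
        ext J; simp only [Finset.mem_filter, Finset.mem_univ, true_and, iff_true, BarIdx.collapse_one_shift, hL, hL₁]; rfl]
    · rw [if_neg hL, show Finset.univ.filter
          (fun J : BarIdx d 0 => BarIdx.collapse 1 (BarIdx.shift J) = L) = ∅ by
        ext J; simp [BarIdx.collapse_one_shift, ← hL₁, Ne.symm hL],
        Finset.prod_empty]
  refine ⟨hone, hcomm, ?_, ?_, ?_⟩
  · -- surjectivity of μ
    intro a
    refine ⟨tprod k (Function.update (fun _ => (1 : A)) L₁ a), ?_⟩
    rw [hμ]
    simp [Function.update_apply]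
  · -- degree 0
    intro x hx0
    refine ⟨σm 0 x, ?_⟩
    have e1 : δ 0 1 (σm 0 x) = 0 := by
      have := LinearMap.congr_fun h3 x
      simp only [LinearMap.comp_apply, hx0, map_zero] at this
      exact this
    rw [Fin.sum_univ_two]
    simp [hone, e1]
  · -- higher degrees
    intro n x hx
    refine ⟨σm (n + 1) x, ?_⟩
    have hx' : ∑ i : Fin (n + 2), ((-1 : ℤ) ^ (i : ℕ)) • δ n i x = 0 := by
      rw [LinearMap.sum_apply] at hx; exact hx
    rw [LinearMap.sum_apply]
    show ∑ i : Fin (n + 3), ((-1 : ℤ) ^ (i : ℕ)) • δ (n + 1) i (σm (n + 1) x) = x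
    rw [Fin.sum_univ_succ]
    simp only [Fin.val_zero, pow_zero, one_smul, hone, Fin.val_succ, hcomm]
    have key : ∑ i : Fin (n + 2), ((-1 : ℤ) ^ ((i : ℕ) + 1)) • σm n (δ n i x) = 0 := by
      have : ∀ i : Fin (n + 2), ((-1 : ℤ) ^ ((i : ℕ) + 1)) • σm n (δ n i x)
          = -(σm n (((-1 : ℤ) ^ (i : ℕ)) • δ n i x)) := by
        intro i
        rw [map_zsmul, pow_succ, mul_neg_one, neg_smul]
      rw [Finset.sum_congr rfl fun i _ => this i]
      simp only [← map_neg, ← map_sum]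
      rw [show ∑ i : Fin (n + 2), -(((-1 : ℤ) ^ (i : ℕ)) • δ n i x) = 0 by
        rw [Finset.sum_neg_distrib, hx', neg_zero], map_zero]
    rw [key, add_zero]
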